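/- The number of labeled trees on {1,...,n} with a fixed degree sequence (d_1,...,d_n) equals the multinomial coefficient (n-2)! / Π(d_i - 1)!, and summing this over all positive integer sequences (d_1,...,d_n) with Σ d_i = 2n-2 gives n^(n-2). -/

import Mathlib

open Finset SimpleGraph


lemma sum_sub_one {n : ℕ} (d : Fin n → ℕ) (hpos : ∀ i, 0 < d i) :
    ∑ i, (d i - 1) = (∑ i, d i) - n := by
  induction n with
  | zero => simp
  | succ m ih =>
    rw [Fin.sum_univ_castSucc, Fin.sum_univ_castSucc (f := d),
      ih (fun i => d (i.castSucc)) (fun i => hpos _)]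
    have h1 : 1 ≤ d (Fin.last m) := hpos _
    have h2 : m ≤ ∑ i : Fin m, d (i.castSucc) := by
      calc m = ∑ _i : Fin m, 1 := by simp
        _ ≤ _ := Finset.sum_le_sum fun i _ => hpos _
    omega

lemma multinomial_eq_div {n : ℕ} (e : Fin n → ℕ) :
    Nat.multinomial univ e = (∑ i, e i).factorial / ∏ i, (e i).factorial := by
  rw [← Nat.multinomial_spec univ e, Nat.mul_div_cancel_left]
  exact Finset.prod_pos fun i _ => Nat.factorial_pos _

lemma part2 (n : ℕ) (hn : 2 ≤ n) :
    ∑ d ∈ (Finset.Nat.antidiagonalTuple n (2 * n - 2)).filter (fun d => ∀ i, 0 < d i),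
        (Nat.factorial (n - 2) / ∏ i, Nat.factorial (d i - 1)) = n ^ (n - 2) := by
  have key := Finset.sum_pow_eq_sum_piAntidiag (univ : Finset (Fin n)) (fun _ => (1 : ℕ)) (n - 2)
  simp only [one_pow, prod_const_one, mul_one, sum_const, card_univ, Fintype.card_fin,
    smul_eq_mul, mul_one, Nat.cast_id] at key
  rw [key]
  refine Finset.sum_nbij' (fun d => fun i => d i - 1) (fun e => fun i => e i + 1) ?_ ?_ ?_ ?_ ?_
  · intro d hd
    simp only [mem_filter, Finset.Nat.mem_antidiagonalTuple] at hd
    simp only [mem_piAntidiag, mem_univ, implies_true, and_true]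
    rw [sum_sub_one d hd.2, hd.1]
    omega
  · intro e he
    simp only [mem_piAntidiag] at he
    simp only [mem_filter, Finset.Nat.mem_antidiagonalTuple]
    refine ⟨?_, fun i => by omega⟩
    rw [Finset.sum_add_distrib, he.1]
    simp only [sum_const, card_univ, Fintype.card_fin, smul_eq_mul, mul_one]
    omega
  · intro d hd
    simp only [mem_filter] at hd
    funext i
    have := hd.2 i
    simp only
    omega
  · intro e _
    funext i
    simp only
    omega
  · intro d hd
    simp only [mem_filter, Finset.Nat.mem_antidiagonalTuple] at hd
    have hs : (∑ i, ((fun i => d i - 1) i)) = n - 2 := by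
      simp only
      rw [sum_sub_one d hd.2, hd.1]
      omega
    rw [multinomial_eq_div, hs]


section Basics
variable {V : Type*}

/-- If the neighbor count of `v` is 1 and `w` is a neighbor, every neighbor equals `w`. -/
lemma unique_nbr [Finite V] {G : SimpleGraph V} {v w : V}
    (h1 : Nat.card {x // G.Adj v x} = 1) (hw : G.Adj v w) :
    ∀ x, G.Adj v x → x = w := by
  intro x hx
  obtain ⟨hs, -⟩ := Nat.card_eq_one_iff_unique.mp h1
  exact congrArg Subtype.val (hs.elim ⟨x, hx⟩ ⟨w, hw⟩)

/-- The base of a cycle has two distinct neighbors. -/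
lemma cycle_base_two_nbrs {G : SimpleGraph V} {v : V} {c : G.Walk v v}
    (hc : c.IsCycle) : ∃ a b, G.Adj v a ∧ G.Adj v b ∧ a ≠ b := by
  have h3 := hc.three_le_length
  cases c with
  | nil => simp at h3
  | cons h q =>
    rename_i x
    -- h : G.Adj v x, q : G.Walk x v
    have hqnil : ¬ q.reverse.Nil := by
      rw [SimpleGraph.Walk.not_nil_iff_lt_length]
      simp only [SimpleGraph.Walk.length_reverse]
      simp only [SimpleGraph.Walk.length_cons] at h3
      omega
    obtain ⟨y, h', r, hr⟩ := SimpleGraph.Walk.not_nil_iff.mp hqnil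
    refine ⟨x, y, h, h', ?_⟩
    have hmem : s(v, y) ∈ q.edges := by
      have : s(v, y) ∈ q.reverse.edges := by rw [hr]; simp
      rwa [SimpleGraph.Walk.edges_reverse, List.mem_reverse] at this
    have hnodup := hc.isTrail.edges_nodup
    simp only [SimpleGraph.Walk.edges_cons, List.nodup_cons] at hnodup
    rintro rfl
    exact hnodup.1 hmem

/-- Every vertex on a cycle has two distinct neighbors. -/
lemma cycle_two_nbrs [DecidableEq V] {G : SimpleGraph V} {u v : V} {c : G.Walk u u}
    (hc : c.IsCycle) (hv : v ∈ c.support) : ∃ a b, G.Adj v a ∧ G.Adj v b ∧ a ≠ b :=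
  cycle_base_two_nbrs (hc.rotate hv)

/-- A vertex with exactly one neighbor lies on no cycle. -/
lemma not_mem_cycle_of_card_nbr_one [Finite V] [DecidableEq V] {G : SimpleGraph V} {u v : V}
    {c : G.Walk u u} (hc : c.IsCycle) (h1 : Nat.card {x // G.Adj v x} = 1) :
    v ∉ c.support := by
  intro hv
  obtain ⟨a, b, ha, hb, hab⟩ := cycle_two_nbrs hc hv
  exact hab ((unique_nbr h1 hb a ha).trans (unique_nbr h1 hb b hb).symm)

lemma nat_card_sigma {m : ℕ} (f : Fin m → Type*) [∀ k, Finite (f k)] :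
    Nat.card (Σ k, f k) = ∑ k, Nat.card (f k) := by
  letI := fun k => Fintype.ofFinite (f k)
  simp [Nat.card_eq_fintype_card]

end Basics

section Lower
variable {n : ℕ} {G : SimpleGraph (Fin (n+1))}

/-- Lower a walk avoiding the last vertex to the comap graph along `Fin.castSucc`. -/
lemma lower_ex : ∀ {a b : Fin (n+1)} (p : G.Walk a b) (ha : a ≠ Fin.last n)
    (hb : b ≠ Fin.last n), (∀ x ∈ p.support, x ≠ Fin.last n) →
    ∃ q : (G.comap Fin.castSucc).Walk (a.castPred ha) (b.castPred hb),
      q.support.map Fin.castSucc = p.support ∧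
      q.edges.map (Sym2.map Fin.castSucc) = p.edges ∧
      q.length = p.length := by
  intro a b p
  induction p with
  | nil => intro ha hb hs; exact ⟨.nil, by simp, by simp, by simp⟩
  | cons h p ih =>
    rename_i u c _
    intro ha hb hs
    have hc : c ≠ Fin.last n := hs c (by simp)
    obtain ⟨q, hq1, hq2, hq3⟩ := ih hc hb (fun x hx => hs x (by simp [hx]))
    have hadj : (G.comap Fin.castSucc).Adj (u.castPred ha) (c.castPred hc) := by
      simpa using h
    exact ⟨.cons hadj q, by simp [hq1], by simp [hq2], by simp [hq3]⟩
  end Lower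

section Avoid
variable {n : ℕ} {G : SimpleGraph (Fin (n+1))}

/-- If the last vertex has a unique neighbor, walks between other vertices can avoid it. -/
lemma avoid_last {w0 : Fin (n+1)} (huniq : ∀ x, G.Adj (Fin.last n) x → x = w0) :
    ∀ (L : ℕ) {a b : Fin (n+1)} (p : G.Walk a b), p.length ≤ L → a ≠ Fin.last n →
    b ≠ Fin.last n → ∃ q : G.Walk a b, ∀ x ∈ q.support, x ≠ Fin.last n := by
  intro L
  induction L with
  | zero =>
    intro a b p hL ha hb
    cases p with
    | nil => exact ⟨.nil, by simpa using ha⟩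
    | cons h q => simp at hL
  | succ L ihL =>
    intro a b p hL ha hb
    cases p with
    | nil => exact ⟨.nil, by simpa using ha⟩
    | cons h p' =>
      rename_i c
      by_cases hc : c = Fin.last n
      · subst hc
        cases p' with
        | nil => exact absurd rfl hb
        | cons h2 p'' =>
          rename_i e
          have he : e = w0 := huniq e h2
          have ha' : a = w0 := huniq a h.symm
          have : G.Walk a b := p''.copy (he.trans ha'.symm) rfl
          obtain ⟨q, hq⟩ := ihL (p''.copy (he.trans ha'.symm) rfl)
            (by simp only [SimpleGraph.Walk.length_copy]
                simp only [SimpleGraph.Walk.length_cons] at hL; omega) ha hb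
          exact ⟨q, hq⟩
      · obtain ⟨q, hq⟩ := ihL p' (by simp only [SimpleGraph.Walk.length_cons] at hL; omega) hc hb
        exact ⟨.cons h q, by
          intro x hx
          simp only [SimpleGraph.Walk.support_cons, List.mem_cons] at hx
          rcases hx with rfl | hx
          · exact ha
          · exact hq x hx⟩
end Avoid

section Ext
variable {n : ℕ}

/-- Attach a pendant vertex `Fin.last n` to vertex `k` of `H`. -/
def extG (H : SimpleGraph (Fin n)) (k : Fin n) : SimpleGraph (Fin (n+1)) where
  Adj a b := (∃ (ha : a ≠ Fin.last n) (hb : b ≠ Fin.last n),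
      H.Adj (a.castPred ha) (b.castPred hb)) ∨
    (a = Fin.last n ∧ b = Fin.castSucc k) ∨ (a = Fin.castSucc k ∧ b = Fin.last n)
  symm := by
    constructor
    rintro a b (⟨ha, hb, h⟩ | ⟨rfl, rfl⟩ | ⟨rfl, rfl⟩)
    · exact Or.inl ⟨hb, ha, h.symm⟩
    · exact Or.inr (Or.inr ⟨rfl, rfl⟩)
    · exact Or.inr (Or.inl ⟨rfl, rfl⟩)
  loopless := by
    constructor
    rintro a (⟨ha, hb, h⟩ | ⟨rfl, h⟩ | ⟨h, rfl⟩)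
    · exact H.irrefl h
    · exact (Fin.castSucc_lt_last k).ne' h
    · exact (Fin.castSucc_lt_last k).ne' h

variable {H : SimpleGraph (Fin n)} {k : Fin n}

lemma extG_comap : (extG H k).comap Fin.castSucc = H := by
  ext i j
  simp only [comap_adj, extG]
  constructor
  · rintro (⟨ha, hb, h⟩ | ⟨h, -⟩ | ⟨-, h⟩)
    · simpa using h
    · exact absurd h (Fin.castSucc_lt_last i).ne
    · exact absurd h (Fin.castSucc_lt_last j).ne
  · intro h
    exact Or.inl ⟨(Fin.castSucc_lt_last i).ne, (Fin.castSucc_lt_last j).ne, by simpa using h⟩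

lemma extG_adj_last {x : Fin (n+1)} : (extG H k).Adj (Fin.last n) x ↔ x = Fin.castSucc k := by
  constructor
  · rintro (⟨ha, -, -⟩ | ⟨-, rfl⟩ | ⟨h, -⟩)
    · exact absurd rfl ha
    · rfl
    · exact absurd h.symm (Fin.castSucc_lt_last k).ne
  · rintro rfl
    exact Or.inr (Or.inl ⟨rfl, rfl⟩)

lemma extG_adj_castSucc {x : Fin (n+1)} {i : Fin n} :
    (extG H k).Adj (Fin.castSucc i) x ↔
      (∃ hx : x ≠ Fin.last n, H.Adj i (x.castPred hx)) ∨ (i = k ∧ x = Fin.last n) := by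
  constructor
  · rintro (⟨ha, hb, h⟩ | ⟨h, -⟩ | ⟨h, rfl⟩)
    · exact Or.inl ⟨hb, by simpa using h⟩
    · exact absurd h (Fin.castSucc_lt_last i).ne
    · exact Or.inr ⟨Fin.castSucc_injective n h, rfl⟩
  · rintro (⟨hx, h⟩ | ⟨rfl, rfl⟩)
    · exact Or.inl ⟨(Fin.castSucc_lt_last i).ne, hx, by simpa using h⟩
    · exact Or.inr (Or.inr ⟨rfl, rfl⟩)

end Ext

section NbrEquivs
variable {n : ℕ} (G : SimpleGraph (Fin (n+1))) (i : Fin n)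

/-- When `castSucc i` is not adjacent to the last vertex, its neighbors correspond. -/
noncomputable def nbrEquivOfNotAdjLast (hlast : ¬ G.Adj (Fin.castSucc i) (Fin.last n)) :
    {w // (G.comap Fin.castSucc).Adj i w} ≃ {w // G.Adj (Fin.castSucc i) w} where
  toFun := fun ⟨w, h⟩ => ⟨Fin.castSucc w, h⟩
  invFun := fun ⟨w, h⟩ => ⟨w.castPred (by rintro rfl; exact hlast h), by
    simp only [comap_adj, Fin.castSucc_castPred]; exact h⟩
  left_inv := fun ⟨w, h⟩ => by simp
  right_inv := fun ⟨w, h⟩ => by simp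

lemma card_nbr_of_notAdjLast (hlast : ¬ G.Adj (Fin.castSucc i) (Fin.last n)) :
    Nat.card {w // (G.comap Fin.castSucc).Adj i w} = Nat.card {w // G.Adj (Fin.castSucc i) w} :=
  Nat.card_congr (nbrEquivOfNotAdjLast G i hlast)

/-- When `castSucc i` is adjacent to the last vertex, it has one extra neighbor. -/
noncomputable def nbrEquivOfAdjLast (hlast : G.Adj (Fin.castSucc i) (Fin.last n)) :
    {w // G.Adj (Fin.castSucc i) w} ≃ Option {w // (G.comap Fin.castSucc).Adj i w} where
  toFun := fun ⟨w, h⟩ => if hw : w = Fin.last n then none else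
    some ⟨w.castPred hw, by simp only [comap_adj, Fin.castSucc_castPred]; exact h⟩
  invFun := fun o => o.elim ⟨Fin.last n, hlast⟩ (fun ⟨w, h⟩ => ⟨Fin.castSucc w, h⟩)
  left_inv := fun ⟨w, h⟩ => by
    by_cases hw : w = Fin.last n
    · subst hw; simp
    · simp [hw]
  right_inv := fun o => by
    match o with
    | none => simp
    | some ⟨w, h⟩ => simp [(Fin.castSucc_lt_last w).ne]

lemma card_nbr_of_adjLast (hlast : G.Adj (Fin.castSucc i) (Fin.last n)) :
    Nat.card {w // G.Adj (Fin.castSucc i) w}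
      = Nat.card {w // (G.comap Fin.castSucc).Adj i w} + 1 := by
  have := Nat.card_congr (nbrEquivOfAdjLast G i hlast)
  rw [this]
  letI := Fintype.ofFinite {w // (G.comap Fin.castSucc).Adj i w}
  simp [Nat.card_eq_fintype_card]

lemma card_nbr_last_eq_one (hk : G.Adj (Fin.last n) (Fin.castSucc k))
    (huniq : ∀ x, G.Adj (Fin.last n) x → x = Fin.castSucc k) :
    Nat.card {w // G.Adj (Fin.last n) w} = 1 := by
  rw [Nat.card_eq_one_iff_unique]
  refine ⟨⟨fun ⟨a, ha⟩ ⟨b, hb⟩ => ?_⟩, ⟨_, hk⟩⟩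
  simp only [Subtype.mk.injEq]
  rw [huniq a ha, huniq b hb]

end NbrEquivs


section Trees
variable {n : ℕ}

lemma comap_isTree {G : SimpleGraph (Fin (n+1))} (hn : 0 < n) (hT : G.IsTree)
    (h1 : Nat.card {w // G.Adj (Fin.last n) w} = 1) :
    (G.comap Fin.castSucc).IsTree := by
  obtain ⟨hs, hne⟩ := Nat.card_eq_one_iff_unique.mp h1
  obtain ⟨w0, hw0⟩ := hne
  have huniq : ∀ x, G.Adj (Fin.last n) x → x = w0 := unique_nbr h1 hw0
  constructor
  · -- connected
    haveI : Nonempty (Fin n) := ⟨⟨0, hn⟩⟩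
    refine Connected.mk fun u v => ?_
    obtain ⟨p⟩ := hT.isConnected.preconnected (Fin.castSucc u) (Fin.castSucc v)
    obtain ⟨q, hq⟩ := avoid_last huniq p.length p le_rfl
      (Fin.castSucc_lt_last u).ne (Fin.castSucc_lt_last v).ne
    obtain ⟨q', -, -, -⟩ := lower_ex q (Fin.castSucc_lt_last u).ne (Fin.castSucc_lt_last v).ne hq
    exact ⟨q'.copy (by simp) (by simp)⟩
  · -- acyclic
    intro v c hc
    have hemb : G.comap Fin.castSucc ↪g G :=
      SimpleGraph.Embedding.comap ⟨Fin.castSucc, Fin.castSucc_injective n⟩ G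
    have : (c.map hemb.toHom).IsCycle :=
      (SimpleGraph.Walk.map_isCycle_iff_of_injective hemb.injective).mpr hc
    exact hT.IsAcyclic _ this

lemma extG_card_nbr_last {H : SimpleGraph (Fin n)} {k : Fin n} :
    Nat.card {w // (extG H k).Adj (Fin.last n) w} = 1 :=
  card_nbr_last_eq_one _ (extG_adj_last.mpr rfl) (fun _ h => extG_adj_last.mp h)

lemma extG_isTree {H : SimpleGraph (Fin n)} {k : Fin n} (hT : H.IsTree) :
    (extG H k).IsTree := by
  constructor
  · -- connected
    have reach : ∀ a, (extG H k).Reachable a (Fin.castSucc k) := by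
      intro a
      by_cases ha : a = Fin.last n
      · subst ha
        exact (extG_adj_last.mpr rfl).reachable
      · have h2 : (extG H k).Reachable (Fin.castSucc (a.castPred ha)) (Fin.castSucc k) :=
          Reachable.map (⟨Fin.castSucc, fun {a b} h => Or.inl ⟨(Fin.castSucc_lt_last a).ne,
            (Fin.castSucc_lt_last b).ne, by simpa using h⟩⟩ : H →g extG H k)
            (hT.isConnected.preconnected (a.castPred ha) k)
        rwa [Fin.castSucc_castPred] at h2
    exact Connected.mk fun a b => (reach a).trans (reach b).symm
  · -- acyclic
    intro v c hc
    have hnotmem : Fin.last n ∉ c.support :=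
      not_mem_cycle_of_card_nbr_one hc extG_card_nbr_last
    have hv : v ≠ Fin.last n := fun h => hnotmem (h ▸ c.start_mem_support)
    obtain ⟨q, hq1, hq2, hq3⟩ := lower_ex c hv hv (fun x hx h => hnotmem (h ▸ hx))
    have hA : ((extG H k).comap Fin.castSucc).IsAcyclic := by
      rw [extG_comap]; exact hT.IsAcyclic
    refine hA q ⟨⟨⟨?_⟩, ?_⟩, ?_⟩
    · -- edges nodup
      have := hc.isTrail.edges_nodup
      rw [← hq2] at this
      exact this.of_map _
    · -- ne nil
      intro h
      rw [h] at hq3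
      have := hc.three_le_length
      simp only [SimpleGraph.Walk.length_nil] at hq3
      omega
    · -- support tail nodup
      have := hc.support_nodup
      rw [← hq1, ← List.map_tail] at this
      exact this.of_map _
end Trees

def TreeDeg (n : ℕ) (d : Fin n → ℕ) : Type :=
  {G : SimpleGraph (Fin n) // G.IsTree ∧ ∀ i, Nat.card {w // G.Adj i w} = d i}

instance (n : ℕ) (d : Fin n → ℕ) : Finite (TreeDeg n d) := by
  unfold TreeDeg; infer_instance

/-- Degree sequence after removing the pendant vertex attached at `k`. -/
def Dk {n : ℕ} (d : Fin (n+1) → ℕ) (k : Fin n) : Fin n → ℕ :=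
  fun j => if j = k then d (Fin.castSucc j) - 1 else d (Fin.castSucc j)

section FiberEquiv
variable {n : ℕ} {d : Fin (n+1) → ℕ} {k : Fin n}

lemma comap_degrees {G : SimpleGraph (Fin (n+1))}
    (hdeg : ∀ i, Nat.card {w // G.Adj i w} = d i) (hd_last : d (Fin.last n) = 1)
    (hadj : G.Adj (Fin.last n) (Fin.castSucc k)) :
    ∀ j, Nat.card {w // (G.comap Fin.castSucc).Adj j w} = Dk d k j := by
  have h1 : Nat.card {w // G.Adj (Fin.last n) w} = 1 := by rw [hdeg]; exact hd_last
  have huniq := unique_nbr h1 hadj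
  intro j
  by_cases hj : j = k
  · subst hj
    have h2 := card_nbr_of_adjLast G j hadj.symm
    rw [hdeg] at h2
    have hDk : Dk d j j = d (Fin.castSucc j) - 1 := by simp [Dk]
    rw [hDk]
    omega
  · have hnot : ¬ G.Adj (Fin.castSucc j) (Fin.last n) := by
      intro h
      exact hj (Fin.castSucc_injective n (huniq _ h.symm))
    rw [card_nbr_of_notAdjLast G j hnot, hdeg]
    simp [Dk, hj]

lemma extG_degrees {H : SimpleGraph (Fin n)}
    (hdeg : ∀ j, Nat.card {w // H.Adj j w} = Dk d k j) (hd_last : d (Fin.last n) = 1)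
    (hpos : 0 < d (Fin.castSucc k)) :
    ∀ i, Nat.card {w // (extG H k).Adj i w} = d i := by
  intro i
  induction i using Fin.lastCases with
  | last => rw [extG_card_nbr_last, hd_last]
  | cast j =>
    by_cases hj : j = k
    · subst hj
      have hadj : (extG H j).Adj (Fin.castSucc j) (Fin.last n) := Or.inr (Or.inr ⟨rfl, rfl⟩)
      have h2 := card_nbr_of_adjLast (extG H j) j hadj
      have h3 : Nat.card {w // ((extG H j).comap Fin.castSucc).Adj j w}
          = Nat.card {w // H.Adj j w} := by rw [extG_comap]
      rw [h3, hdeg] at h2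
      have hDk : Dk d j j = d (Fin.castSucc j) - 1 := by simp [Dk]
      rw [hDk] at h2
      have hp : 0 < d (Fin.castSucc j) := hpos
      omega
    · have hnot : ¬ (extG H k).Adj (Fin.castSucc j) (Fin.last n) := by
        intro h
        rcases extG_adj_castSucc.mp h with ⟨hx, -⟩ | ⟨h', -⟩
        · exact hx rfl
        · exact hj h'
      have h2 := card_nbr_of_notAdjLast (extG H k) j hnot
      have h3 : Nat.card {w // ((extG H k).comap Fin.castSucc).Adj j w}
          = Nat.card {w // H.Adj j w} := by rw [extG_comap]
      rw [← h2, h3, hdeg]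
      simp [Dk, hj]

lemma extG_comap_eq {G : SimpleGraph (Fin (n+1))}
    (hadj : G.Adj (Fin.last n) (Fin.castSucc k))
    (huniq : ∀ x, G.Adj (Fin.last n) x → x = Fin.castSucc k) :
    extG (G.comap Fin.castSucc) k = G := by
  ext a b
  constructor
  · rintro (⟨ha, hb, h⟩ | ⟨rfl, rfl⟩ | ⟨rfl, rfl⟩)
    · simpa using h
    · exact hadj
    · exact hadj.symm
  · intro h
    by_cases ha : a = Fin.last n
    · subst ha
      exact Or.inr (Or.inl ⟨rfl, huniq b h⟩)
    · by_cases hb : b = Fin.last n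
      · subst hb
        exact Or.inr (Or.inr ⟨huniq a h.symm, rfl⟩)
      · exact Or.inl ⟨ha, hb, by simpa using h⟩

noncomputable def fiberEquiv (hn : 0 < n) (hd_last : d (Fin.last n) = 1)
    (hpos : 0 < d (Fin.castSucc k)) :
    {p : TreeDeg (n+1) d // p.1.Adj (Fin.last n) (Fin.castSucc k)} ≃ TreeDeg n (Dk d k) where
  toFun := fun ⟨⟨G, hT, hdeg⟩, hadj⟩ =>
    ⟨G.comap Fin.castSucc, comap_isTree hn hT (by rw [hdeg]; exact hd_last),
      comap_degrees hdeg hd_last hadj⟩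
  invFun := fun ⟨H, hT, hdeg⟩ =>
    ⟨⟨extG H k, extG_isTree hT, extG_degrees hdeg hd_last hpos⟩, Or.inr (Or.inl ⟨rfl, rfl⟩)⟩
  left_inv := fun ⟨⟨G, hT, hdeg⟩, hadj⟩ => by
    have h1 : Nat.card {w // G.Adj (Fin.last n) w} = 1 := by rw [hdeg]; exact hd_last
    apply Subtype.ext
    apply Subtype.ext
    exact extG_comap_eq hadj (unique_nbr h1 hadj)
  right_inv := fun ⟨H, hT, hdeg⟩ => Subtype.ext extG_comap

lemma treeDeg_empty {m : ℕ} (hm : 2 ≤ m) (D : Fin m → ℕ) (j : Fin m) (hDj : D j = 0) :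
    IsEmpty (TreeDeg m D) := by
  constructor
  rintro ⟨G, hT, hdeg⟩
  have hj0 := hdeg j
  rw [hDj] at hj0
  obtain ⟨v, hv⟩ : ∃ v : Fin m, v ≠ j :=
    Fintype.exists_ne_of_one_lt_card (by simp; omega) j
  obtain ⟨p⟩ := hT.isConnected.preconnected j v
  have hnn : ¬ p.Nil := SimpleGraph.Walk.not_nil_of_ne (Ne.symm hv)
  obtain ⟨x, hadj, -, -⟩ := SimpleGraph.Walk.not_nil_iff.mp hnn
  have : Nat.card {w // G.Adj j w} ≠ 0 :=
    Nat.card_ne_zero.mpr ⟨⟨⟨x, hadj⟩⟩, inferInstance⟩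
  exact this hj0

lemma card_treeDeg_succ (hd_last : d (Fin.last n) = 1) :
    Nat.card (TreeDeg (n+1) d) =
      ∑ k : Fin n, Nat.card {p : TreeDeg (n+1) d // p.1.Adj (Fin.last n) (Fin.castSucc k)} := by
  have h1 : ∀ p : TreeDeg (n+1) d, Nat.card {w // p.1.Adj (Fin.last n) w} = 1 :=
    fun p => by rw [p.2.2]; exact hd_last
  have hne : ∀ p : TreeDeg (n+1) d, Nonempty {w // p.1.Adj (Fin.last n) w} :=
    fun p => (Nat.card_eq_one_iff_unique.mp (h1 p)).2
  classical
  let w0 : ∀ p : TreeDeg (n+1) d, {w // p.1.Adj (Fin.last n) w} :=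
    fun p => Classical.choice (hne p)
  have hw0ne : ∀ p, (w0 p).1 ≠ Fin.last n := fun p h => p.1.irrefl (h ▸ (w0 p).2)
  let nbrF : TreeDeg (n+1) d → Fin n := fun p => ((w0 p).1).castPred (hw0ne p)
  have key : ∀ (p : TreeDeg (n+1) d) (k : Fin n),
      nbrF p = k ↔ p.1.Adj (Fin.last n) (Fin.castSucc k) := by
    intro p k
    constructor
    · rintro rfl
      have : Fin.castSucc (nbrF p) = (w0 p).1 := by simp [nbrF]
      rw [this]
      exact (w0 p).2
    · intro hadj
      have := unique_nbr (h1 p) (w0 p).2 _ hadj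
      simp [nbrF, ← this]
  rw [← Nat.card_congr (Equiv.sigmaFiberEquiv nbrF), nat_card_sigma]
  exact Finset.sum_congr rfl fun k _ =>
    Nat.card_congr (Equiv.subtypeEquivRight fun p => key p k)
end FiberEquiv

lemma multinomial_rec {m : ℕ} (e : Fin m → ℕ) (hsum : 0 < ∑ i, e i) :
    ∑ k, (if 0 < e k then Nat.multinomial univ (Function.update e k (e k - 1)) else 0)
      = Nat.multinomial univ e := by
  set P := ∏ i, (e i).factorial with hP
  have hPpos : 0 < P := Finset.prod_pos fun i _ => Nat.factorial_pos _
  set N := ∑ i, e i with hN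
  have key : ∀ k : Fin m,
      P * (if 0 < e k then Nat.multinomial univ (Function.update e k (e k - 1)) else 0)
        = e k * (N - 1).factorial := by
    intro k
    by_cases hk : 0 < e k
    · rw [if_pos hk]
      have hsum_upd : ∑ i, Function.update e k (e k - 1) i = N - 1 := by
        rw [Finset.sum_update_of_mem (mem_univ k)]
        have h4 : N = e k + ∑ x ∈ univ \ {k}, e x := by
          rw [hN, ← Finset.sum_update_of_mem (mem_univ k)]
          congr 1
          funext j
          by_cases hj : j = k <;> simp [hj, Function.update_apply]
        omega
      have hprod : P = e k * ∏ i, (Function.update e k (e k - 1) i).factorial := by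
        rw [hP, ← Finset.mul_prod_erase univ _ (mem_univ k),
          ← Finset.mul_prod_erase univ (fun i => (Function.update e k (e k - 1) i).factorial)
            (mem_univ k)]
        have h5 : ∏ x ∈ univ.erase k, (Function.update e k (e k - 1) x).factorial
            = ∏ x ∈ univ.erase k, (e x).factorial :=
          Finset.prod_congr rfl fun x hx => by
            rw [Function.update_apply, if_neg (Finset.mem_erase.mp hx).1]
        rw [h5, Function.update_self, ← mul_assoc, Nat.mul_factorial_pred hk.ne']
      rw [hprod, mul_assoc, Nat.multinomial_spec, hsum_upd]
    · rw [if_neg hk]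
      have : e k = 0 := by omega
      simp [this]
  have lhs : P * (∑ k, (if 0 < e k then
      Nat.multinomial univ (Function.update e k (e k - 1)) else 0)) = P * Nat.multinomial univ e := by
    rw [Finset.mul_sum]
    calc ∑ k, P * (if 0 < e k then Nat.multinomial univ (Function.update e k (e k - 1)) else 0)
        = ∑ k, e k * (N - 1).factorial := Finset.sum_congr rfl fun k _ => key k
      _ = N * (N - 1).factorial := by rw [← Finset.sum_mul, ← hN]
      _ = N.factorial := Nat.mul_factorial_pred hsum.ne'
      _ = P * Nat.multinomial univ e := by rw [hP, Nat.multinomial_spec]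
  exact Nat.eq_of_mul_eq_mul_left hPpos lhs

section Perm
variable {m : ℕ}

lemma isTree_comap_perm {σ : Equiv.Perm (Fin m)} {G : SimpleGraph (Fin m)} (hT : G.IsTree) :
    (G.comap ⇑σ).IsTree := by
  constructor
  · exact (SimpleGraph.Iso.comap σ G).connected_iff.mpr hT.isConnected
  · intro v c hc
    exact hT.IsAcyclic (c.map (SimpleGraph.Iso.comap σ G).toHom)
      ((SimpleGraph.Walk.map_isCycle_iff_of_injective
        (SimpleGraph.Iso.comap σ G).injective).mpr hc)

def nbrPermEquiv (σ : Equiv.Perm (Fin m)) (G : SimpleGraph (Fin m)) (i : Fin m) :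
    {w // (G.comap ⇑σ).Adj i w} ≃ {w // G.Adj (σ i) w} where
  toFun := fun ⟨w, h⟩ => ⟨σ w, h⟩
  invFun := fun ⟨w, h⟩ => ⟨σ.symm w, by simp only [comap_adj, Equiv.apply_symm_apply]; exact h⟩
  left_inv := fun ⟨w, h⟩ => by simp
  right_inv := fun ⟨w, h⟩ => by simp

noncomputable def treeDegPermEquiv (σ : Equiv.Perm (Fin m)) (D : Fin m → ℕ) :
    TreeDeg m D ≃ TreeDeg m (D ∘ σ) where
  toFun := fun ⟨G, hT, hdeg⟩ => ⟨G.comap ⇑σ, isTree_comap_perm hT,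
    fun i => by rw [Nat.card_congr (nbrPermEquiv σ G i), hdeg]; rfl⟩
  invFun := fun ⟨G, hT, hdeg⟩ => ⟨G.comap ⇑σ.symm, isTree_comap_perm hT,
    fun i => by
      rw [Nat.card_congr (nbrPermEquiv σ.symm G i), hdeg]
      simp⟩
  left_inv := fun ⟨G, hT, hdeg⟩ => by
    apply Subtype.ext
    ext a b
    simp
  right_inv := fun ⟨G, hT, hdeg⟩ => by
    apply Subtype.ext
    ext a b
    simp
end Perm

lemma fin2_eq {a b x : Fin 2} (hx : x ≠ a) (hb : b ≠ a) : x = b := by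
  have h1 := a.isLt; have h2 := b.isLt; have h3 := x.isLt
  simp only [Ne, Fin.ext_iff] at hx hb ⊢
  omega

lemma tree2_adj {G : SimpleGraph (Fin 2)} (hT : G.IsTree) : ∀ a b, G.Adj a b ↔ a ≠ b := by
  intro a b
  constructor
  · exact fun h => h.ne
  · intro hab
    obtain ⟨p⟩ := hT.isConnected.preconnected a b
    have hnn : ¬ p.Nil := SimpleGraph.Walk.not_nil_of_ne hab
    obtain ⟨x, hadj, q, -⟩ := SimpleGraph.Walk.not_nil_iff.mp hnn
    have hx : x = b := fin2_eq (hadj.ne') (Ne.symm hab)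
    rwa [hx] at hadj

lemma top2_isTree : (⊤ : SimpleGraph (Fin 2)).IsTree := by
  constructor
  · exact SimpleGraph.connected_top
  · intro v c hc
    have h3 := hc.three_le_length
    have hnd := hc.support_nodup
    have hlen := SimpleGraph.Walk.length_support c
    have hcard := List.Nodup.length_le_card hnd
    simp only [Fintype.card_fin] at hcard
    have : c.support.tail.length = c.length := by
      have := SimpleGraph.Walk.length_support c
      simp [List.length_tail, this]
    omega

lemma card_nbr_top2 (i : Fin 2) : Nat.card {w // (⊤ : SimpleGraph (Fin 2)).Adj i w} = 1 := by
  rw [Nat.card_eq_one_iff_unique]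
  constructor
  · constructor
    rintro ⟨x, hx⟩ ⟨y, hy⟩
    simp only [Subtype.mk.injEq]
    exact fin2_eq hx.ne' hy.ne'
  · obtain ⟨w, hw⟩ := Fintype.exists_ne_of_one_lt_card (by simp) i
    exact ⟨⟨w, by simpa using (Ne.symm hw)⟩⟩

lemma base_case (D : Fin 2 → ℕ) (hpos : ∀ i, 0 < D i) (hsum : ∑ i, D i = 2 * 2 - 2) :
    Nat.card (TreeDeg 2 D) = Nat.multinomial univ (fun i => D i - 1) := by
  have h0 : D 0 = 1 ∧ D 1 = 1 := by
    have := Fin.sum_univ_two D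
    rw [hsum] at this
    have := hpos 0; have := hpos 1
    omega
  have hD : ∀ i, D i = 1 := by
    intro i
    match i with
    | 0 => exact h0.1
    | 1 => exact h0.2
  have hm : Nat.multinomial univ (fun i => D i - 1) = 1 := by
    have : (fun i => D i - 1) = fun _ : Fin 2 => 0 := funext fun i => by rw [hD i]
    rw [this]
    have h2 := Nat.multinomial_spec (univ : Finset (Fin 2)) (fun _ => 0)
    simpa using h2
  rw [hm, Nat.card_eq_one_iff_unique]
  constructor
  · constructor
    rintro ⟨G, hT, -⟩ ⟨G', hT', -⟩
    apply Subtype.ext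
    ext a b
    rw [tree2_adj hT, tree2_adj hT']
  · exact ⟨⟨⊤, top2_isTree, fun i => by rw [card_nbr_top2, hD]⟩⟩

lemma main_count (m : ℕ) (hm : 2 ≤ m) :
    ∀ D : Fin m → ℕ, (∀ i, 0 < D i) → ∑ i, D i = 2 * m - 2 →
      Nat.card (TreeDeg m D) = Nat.multinomial univ (fun i => D i - 1) := by
  induction m, hm using Nat.le_induction with
  | base => exact base_case
  | succ n hn ih =>
    intro D hpos hsum
    have hex : ∃ j, D j = 1 := by
      by_contra h
      push_neg at h
      have h2 : ∀ i, 2 ≤ D i := fun i => by have := hpos i; have := h i; omega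
      have h3 : ∑ _i : Fin (n+1), 2 ≤ ∑ i, D i := Finset.sum_le_sum fun i _ => h2 i
      simp only [sum_const, card_univ, Fintype.card_fin, smul_eq_mul] at h3
      omega
    obtain ⟨j, hj⟩ := hex
    set σ := Equiv.swap j (Fin.last n) with hσ
    have hcard : Nat.card (TreeDeg (n+1) D) = Nat.card (TreeDeg (n+1) (D ∘ σ)) :=
      Nat.card_congr (treeDegPermEquiv σ D)
    have hmul : Nat.multinomial univ (fun i => (D ∘ σ) i - 1)
        = Nat.multinomial univ (fun i => D i - 1) := by
      rw [multinomial_eq_div, multinomial_eq_div]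
      have h1 : ∑ i, ((D ∘ σ) i - 1) = ∑ i, (D i - 1) := Equiv.sum_comp σ (fun i => D i - 1)
      have h2 : ∏ i, ((D ∘ σ) i - 1).factorial = ∏ i, (D i - 1).factorial :=
        Equiv.prod_comp σ (fun i => (D i - 1).factorial)
      rw [h1, h2]
    rw [hcard, ← hmul]
    have hEpos : ∀ i, 0 < (D ∘ σ) i := fun i => hpos _
    have hEsum : ∑ i, (D ∘ σ) i = 2 * (n+1) - 2 := by
      rw [← hsum]; exact Equiv.sum_comp σ D
    have hElast : (D ∘ σ) (Fin.last n) = 1 := by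
      simp only [Function.comp_apply, hσ, Equiv.swap_apply_right]; exact hj
    set E := D ∘ σ with hE
    rw [card_treeDeg_succ hElast]
    set e : Fin n → ℕ := fun k => E (Fin.castSucc k) - 1 with he
    have hcs : ∑ k : Fin n, E (Fin.castSucc k) = 2 * n - 1 := by
      have h4 := Fin.sum_univ_castSucc E
      rw [hEsum, hElast] at h4
      omega
    have hsum_e : ∑ k, e k = n - 1 := by
      rw [he, sum_sub_one (fun k => E (Fin.castSucc k)) (fun k => hEpos _), hcs]
      omega
    have claim : ∀ k : Fin n,
        Nat.card {p : TreeDeg (n+1) E // p.1.Adj (Fin.last n) (Fin.castSucc k)}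
          = if 0 < e k then Nat.multinomial univ (Function.update e k (e k - 1)) else 0 := by
      intro k
      have hkpos : 0 < E (Fin.castSucc k) := hEpos _
      have hcardk := Nat.card_congr (fiberEquiv (by omega : 0 < n) hElast hkpos)
      have hek_eq : e k = E (Fin.castSucc k) - 1 := rfl
      by_cases hek : 0 < e k
      · rw [if_pos hek, hcardk]
        have hDkpos : ∀ i, 0 < Dk E k i := by
          intro i
          by_cases hik : i = k
          · subst hik
            have hq : Dk E i i = E (Fin.castSucc i) - 1 := by simp [Dk]
            rw [hq]
            omega
          · simp only [Dk, if_neg hik]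
            exact hEpos _
        have hDkupd : Dk E k = Function.update (fun i => E (Fin.castSucc i)) k
            (E (Fin.castSucc k) - 1) := by
          funext i
          by_cases hik : i = k
          · subst hik; simp [Dk, Function.update_self]
          · simp [Dk, hik, Function.update_apply]
        have hDksum : ∑ i, Dk E k i = 2 * n - 2 := by
          rw [hDkupd, Finset.sum_update_of_mem (mem_univ k)]
          have h5 : ∑ i : Fin n, E (Fin.castSucc i)
              = E (Fin.castSucc k) + ∑ x ∈ univ \ {k}, E (Fin.castSucc x) := by
            rw [← Finset.sum_update_of_mem (mem_univ k)]
            apply Finset.sum_congr rfl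
            intro i _
            by_cases hik : i = k
            · subst hik; simp
            · simp [Function.update_apply, hik]
          rw [h5] at hcs
          omega
        rw [ih (Dk E k) hDkpos hDksum]
        congr 1
        funext i
        by_cases hik : i = k
        · subst hik
          have hq : Dk E i i = E (Fin.castSucc i) - 1 := by simp [Dk]
          rw [hq, Function.update_self, hek_eq]
        · simp only [Dk, if_neg hik, Function.update_apply, if_neg hik]
          rfl
      · rw [if_neg hek, hcardk]
        have h0 : Dk E k k = 0 := by
          have hq : Dk E k k = E (Fin.castSucc k) - 1 := by simp [Dk]
          rw [hq]
          omega
        haveI := treeDeg_empty hn (Dk E k) k h0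
        exact Nat.card_of_isEmpty
    rw [Finset.sum_congr rfl (fun k _ => claim k), multinomial_rec e (by omega)]
    rw [multinomial_eq_div, multinomial_eq_div]
    have hnum : ∑ k, e k = ∑ i : Fin (n+1), (E i - 1) := by
      rw [Fin.sum_univ_castSucc (f := fun i : Fin (n+1) => E i - 1), hElast]
      simp [he]
    have hden : ∏ k, (e k).factorial = ∏ i : Fin (n+1), (E i - 1).factorial := by
      rw [Fin.prod_univ_castSucc (f := fun i : Fin (n+1) => (E i - 1).factorial), hElast]
      simp [he]
    rw [hnum, hden]

/-- The number of labeled trees with a fixed degree sequence is the multinomial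
coefficient `(n-2)!/∏ (d_i - 1)!`, and summing this over all positive degree sequences
with sum `2n - 2` recovers Cayley's formula `n^(n-2)`. -/
theorem degree_sequence_count_and_cayley (n : ℕ) (hn : 2 ≤ n) :
    (∀ d : Fin n → ℕ, (∀ i, 0 < d i) → ∑ i, d i = 2 * n - 2 →
        Nat.card {G : SimpleGraph (Fin n) //
            G.IsTree ∧ ∀ i, Nat.card {w // G.Adj i w} = d i} =
          Nat.factorial (n - 2) / ∏ i, Nat.factorial (d i - 1)) ∧
    ∑ d ∈ (Finset.Nat.antidiagonalTuple n (2 * n - 2)).filter (fun d => ∀ i, 0 < d i),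
        (Nat.factorial (n - 2) / ∏ i, Nat.factorial (d i - 1)) = n ^ (n - 2) := by
  constructor
  · intro d hpos hsum
    have h1 : Nat.card (TreeDeg n d) = Nat.multinomial univ (fun i => d i - 1) :=
      main_count n hn d hpos hsum
    have h2 : (∑ i, (d i - 1)) = n - 2 := by
      rw [sum_sub_one d hpos, hsum]
      omega
    rw [multinomial_eq_div, h2] at h1
    exact h1
  · exact part2 n hn
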